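/- The non-alternating unfolding of a causal strategy is a non-alternating strategy: for a causal strategy σ on a negative arena A, the set of displays of linearizations of configurations of σ is non-empty, prefix-closed, receptive, and courteous. -/

import Mathlib

set_option autoImplicit false

/-- Immediate causality `a ⋗ b` for a relation `le`. -/
def immOf {α : Type} (le : α → α → Prop) (a b : α) : Prop :=
  le a b ∧ a ≠ b ∧ ∀ c, le a c → le c b → c = a ∨ c = b

/-- Configurations: finite, down-closed, consistent sets. -/
def ConfigOf {α : Type} (le conflict : α → α → Prop) (x : Set α) : Prop :=
  x.Finite ∧ (∀ e ∈ x, ∀ e', le e' e → e' ∈ x) ∧ ∀ e ∈ x, ∀ e' ∈ x, ¬ conflict e e'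

/-- Minimality for a causal dependency relation. -/
def MinimalOf {α : Type} (le : α → α → Prop) (a : α) : Prop := ∀ a', le a' a → a' = a

/-- An arena: an event structure with polarities (`true` = Player `+`,
`false` = Opponent `−`) which is alternating, forestial and race-free. -/
structure Arena (α : Type) where
  le : α → α → Prop
  conflict : α → α → Prop
  pol : α → Bool
  le_refl : ∀ e, le e e
  le_trans : ∀ {a b c : α}, le a b → le b c → le a c
  le_antisymm : ∀ {a b : α}, le a b → le b a → a = b
  finite_causes : ∀ e : α, Set.Finite {e' | le e' e}
  conflict_irrefl : ∀ e, ¬ conflict e e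
  conflict_symm : ∀ {a b : α}, conflict a b → conflict b a
  conflict_inherit : ∀ {a b b' : α}, conflict a b → le b b' → conflict a b'
  alternating : ∀ {a b : α}, immOf le a b → pol a ≠ pol b
  forestial : ∀ {a1 a2 a : α}, le a1 a → le a2 a → le a1 a2 ∨ le a2 a1
  race_free : ∀ {a1 a2 : α}, conflict a1 a2 →
    (∀ a1' a2', le a1' a1 → le a2' a2 → conflict a1' a2' → a1' = a1 ∧ a2' = a2) →
    pol a1 = pol a2

/-- A causal strategy on an arena `A`: an event structure of strategy events with a
display map `dsp` to the arena which is a map of event structures (preserves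
configurations, locally injective), is negative (minimal events display to
negative moves), courteous (immediate causal links with positive source or
negative target are sent to immediate causal links of `A`), and receptive (every
negative extension of the display of a configuration is witnessed by a unique
extension of the configuration). Polarities of strategy events are inherited
through `dsp`. -/
structure CausalStrategy {α : Type} (A : Arena α) (β : Type) where
  le : β → β → Prop
  conflict : β → β → Prop
  le_refl : ∀ e, le e e
  le_trans : ∀ {a b c : β}, le a b → le b c → le a c
  le_antisymm : ∀ {a b : β}, le a b → le b a → a = b
  finite_causes : ∀ e : β, Set.Finite {e' | le e' e}
  conflict_irrefl : ∀ e, ¬ conflict e e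
  conflict_symm : ∀ {a b : β}, conflict a b → conflict b a
  conflict_inherit : ∀ {a b b' : β}, conflict a b → le b b' → conflict a b'
  dsp : β → α
  dsp_config : ∀ x : Set β, ConfigOf le conflict x → ConfigOf A.le A.conflict (dsp '' x)
  dsp_locInj : ∀ x : Set β, ConfigOf le conflict x →
      ∀ e1 ∈ x, ∀ e2 ∈ x, dsp e1 = dsp e2 → e1 = e2
  negative : ∀ m : β, MinimalOf le m → A.pol (dsp m) = false
  courteous : ∀ m n : β, immOf le m n →
      (A.pol (dsp m) = true ∨ A.pol (dsp n) = false) → immOf A.le (dsp m) (dsp n)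
  receptive : ∀ x : Set β, ConfigOf le conflict x → ∀ a : α, A.pol a = false →
      a ∉ dsp '' x → ConfigOf A.le A.conflict (insert a (dsp '' x)) →
      ∃! m : β, m ∉ x ∧ ConfigOf le conflict (insert m x) ∧ dsp m = a

/-- A non-alternating play: a sequence of pairwise-distinct events whose every
prefix reaches a configuration, starting (if non-empty) with a negative move. -/
def NAltPlayOf {γ : Type} (le conflict : γ → γ → Prop) (pol : γ → Bool)
    (s : List γ) : Prop :=
  (∀ t, t <+: s → ConfigOf le conflict {a | a ∈ t}) ∧
  s.Nodup ∧
  (∀ a : γ, s[0]? = some a → pol a = false)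

/-- The non-alternating unfolding of a causal strategy: the displays (applied
move-wise) of the non-alternating plays of `σ` (linearizations of its
configurations). -/
def Unfold {α β : Type} {A : Arena α} (S : CausalStrategy A β) : Set (List α) :=
  {s | ∃ t : List β,
        NAltPlayOf S.le S.conflict (fun m => A.pol (S.dsp m)) t ∧ s = t.map S.dsp}

/- ## Auxiliary lemmas -/

private lemma prefix_append_cases {γ : Type} {l₁ l₂ q : List γ} (h : q <+: l₁ ++ l₂) :
    q <+: l₁ ∨ ∃ p, p <+: l₂ ∧ q = l₁ ++ p := by
  induction l₁ generalizing q with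
  | nil => exact Or.inr ⟨q, h, rfl⟩
  | cons a l ih =>
    cases q with
    | nil => exact Or.inl (List.nil_prefix)
    | cons b q' =>
      rw [List.cons_append, List.cons_prefix_cons] at h
      obtain ⟨rfl, h'⟩ := h
      rcases ih h' with h1 | ⟨p, hp, rfl⟩
      · exact Or.inl (List.cons_prefix_cons.mpr ⟨rfl, h1⟩)
      · exact Or.inr ⟨p, hp, rfl⟩

private lemma prefix_map_cases {γ δ : Type} {f : γ → δ} {l : List γ} {q : List δ}
    (h : q <+: l.map f) : ∃ p, p <+: l ∧ q = p.map f := by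
  obtain ⟨r, hr⟩ := h
  obtain ⟨l₁, l₂, rfl, h1, _h2⟩ := List.map_eq_append_iff.mp hr.symm
  exact ⟨l₁, ⟨l₂, rfl⟩, h1.symm⟩

private lemma set_map {γ δ : Type} (f : γ → δ) (l : List γ) :
    {a | a ∈ l.map f} = f '' {a | a ∈ l} := by
  ext a; simp [List.mem_map, Set.mem_image]

private lemma set_concat {γ : Type} (l : List γ) (a : γ) :
    {x | x ∈ l ++ [a]} = insert a {x | x ∈ l} := by
  ext x; simp [or_comm]

private lemma naplay_prefix {γ : Type} {le conflict : γ → γ → Prop} {pol : γ → Bool}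
    {s t : List γ} (h : s <+: t) (ht : NAltPlayOf le conflict pol t) :
    NAltPlayOf le conflict pol s := by
  obtain ⟨hc, hn, hh⟩ := ht
  refine ⟨fun q hq => hc q (hq.trans h), hn.sublist h.sublist, ?_⟩
  intro a ha
  apply hh
  obtain ⟨r, rfl⟩ := h
  cases s with
  | nil => simp at ha
  | cons b s' => simpa using ha

private lemma unfold_play {α β : Type} {A : Arena α} (S : CausalStrategy A β)
    {t : List β} (ht : NAltPlayOf S.le S.conflict (fun m => A.pol (S.dsp m)) t) :
    NAltPlayOf A.le A.conflict A.pol (t.map S.dsp) := by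
  obtain ⟨hc, hn, hh⟩ := ht
  refine ⟨?_, ?_, ?_⟩
  · intro q hq
    obtain ⟨p, hp, rfl⟩ := prefix_map_cases hq
    rw [set_map]
    exact S.dsp_config _ (hc p hp)
  · refine List.Nodup.map_on ?_ hn
    intro x hx y hy hxy
    exact S.dsp_locInj _ (hc t (List.prefix_refl t)) x hx y hy hxy
  · intro a ha
    cases t with
    | nil => simp at ha
    | cons m t' =>
      simp only [List.map_cons, List.getElem?_cons_zero, Option.some.injEq] at ha
      subst ha
      exact hh m (by simp)

/-- The non-alternating unfolding of a causal strategy on a negative arena is a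
non-alternating strategy: a set of non-alternating plays which is non-empty,
prefix-closed, receptive, and courteous. -/
theorem unfolding_is_nonAlternating_strategy {α β : Type} (A : Arena α)
    (hneg : ∀ a : α, MinimalOf A.le a → A.pol a = false)
    (S : CausalStrategy A β) :
    ([] ∈ Unfold S) ∧
    (∀ s t : List α, s <+: t → t ∈ Unfold S → s ∈ Unfold S) ∧
    (∀ s ∈ Unfold S, NAltPlayOf A.le A.conflict A.pol s) ∧
    (∀ (s : List α) (a : α), s ∈ Unfold S → A.pol a = false →
        NAltPlayOf A.le A.conflict A.pol (s ++ [a]) → s ++ [a] ∈ Unfold S) ∧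
    (∀ (s t : List α) (a b : α), (s ++ a :: b :: t) ∈ Unfold S →
        (A.pol b = false ∨ A.pol a = true) →
        NAltPlayOf A.le A.conflict A.pol (s ++ [b]) →
        (s ++ b :: a :: t) ∈ Unfold S) := by
  refine ⟨?_, ?_, ?_, ?_, ?_⟩
  -- non-emptiness
  · refine ⟨[], ⟨?_, by simp, by simp⟩, rfl⟩
    intro q hq
    rw [List.prefix_nil] at hq; subst hq
    exact ⟨by simp, by simp, by simp⟩
  -- prefix-closedness
  · rintro s t hst ⟨u, hu, rfl⟩
    obtain ⟨p, hp, rfl⟩ := prefix_map_cases hst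
    exact ⟨p, naplay_prefix hp hu, rfl⟩
  -- plays of A
  · rintro s ⟨u, hu, rfl⟩
    exact unfold_play S hu
  -- receptivity
  · rintro s a ⟨t, ht, rfl⟩ hpa hNA
    have hx : ConfigOf S.le S.conflict {e | e ∈ t} := ht.1 t (List.prefix_refl t)
    have hanotin : a ∉ S.dsp '' {e | e ∈ t} := by
      rw [← set_map]
      intro hmem
      have hnod := hNA.2.1
      rw [List.nodup_append] at hnod
      exact hnod.2.2 a hmem a (by simp) rfl
    have hcfg : ConfigOf A.le A.conflict (insert a (S.dsp '' {e | e ∈ t})) := by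
      rw [← set_map, ← set_concat]
      exact hNA.1 _ (List.prefix_refl _)
    obtain ⟨m, ⟨hm1, hm2, hm3⟩, -⟩ := S.receptive _ hx a hpa hanotin hcfg
    refine ⟨t ++ [m], ⟨?_, ?_, ?_⟩, by simp [hm3]⟩
    · intro q hq
      rcases List.prefix_concat_iff.mp hq with rfl | hq
      · rw [set_concat]; exact hm2
      · exact ht.1 q hq
    · rw [List.nodup_append]
      exact ⟨ht.2.1, by simp, by intro x hx' y hy hxy; simp at hy; subst hy; subst hxy; exact hm1 hx'⟩
    · intro c hc
      cases t with
      | nil =>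
        simp only [List.nil_append, List.getElem?_cons_zero, Option.some.injEq] at hc
        subst hc
        show A.pol (S.dsp m) = false
        rw [hm3]; exact hpa
      | cons d t' =>
        simp only [List.cons_append, List.getElem?_cons_zero, Option.some.injEq] at hc
        subst hc
        exact ht.2.2 d (by simp)
  -- courtesy
  · rintro s t a b ⟨u, hu, hmap⟩ hpol hsb
    obtain ⟨u₁, w, rfl, hmap₁, hmapw⟩ := List.map_eq_append_iff.mp hmap.symm
    cases w with
    | nil => simp at hmapw
    | cons m w' =>
      cases w' with
      | nil => simp at hmapw
      | cons n u₂ =>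
        simp only [List.map_cons, List.cons.injEq] at hmapw
        obtain ⟨hdm, hdn, hmapt⟩ := hmapw
        -- basic facts from the original play
        have hX0 : ConfigOf S.le S.conflict {e | e ∈ u₁} :=
          hu.1 u₁ ⟨m :: n :: u₂, rfl⟩
        have hX2 : ConfigOf S.le S.conflict {e | e ∈ u₁ ++ [m, n]} :=
          hu.1 _ ⟨u₂, by simp⟩
        have hnod := hu.2.1
        rw [List.nodup_append] at hnod
        have hmu₁ : m ∉ u₁ := fun hm => hnod.2.2 m hm m (by simp) rfl
        have hnu₁ : n ∉ u₁ := fun hn => hnod.2.2 n hn n (by simp) rfl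
        have hmn : m ≠ n := by
          have := hnod.2.1
          rw [List.nodup_cons] at this
          intro h; exact this.1 (h ▸ (List.mem_cons_self : n ∈ n :: u₂))
        -- the key fact: m does not cause n
        have key : ¬ S.le m n := by
          intro hle
          have himm : immOf S.le m n := by
            refine ⟨hle, hmn, ?_⟩
            intro c hmc hcn
            have hcX2 : c ∈ {e | e ∈ u₁ ++ [m, n]} := hX2.2.1 n (by simp) c hcn
            simp only [Set.mem_setOf_eq, List.mem_append, List.mem_cons,
              List.mem_singleton, List.not_mem_nil, or_false] at hcX2
            rcases hcX2 with hc | hc | hc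
            · exact absurd (hX0.2.1 c hc m hmc) hmu₁
            · exact Or.inl hc
            · exact Or.inr hc
          have hAimm := S.courteous m n himm (by
            rcases hpol with h | h
            · exact Or.inr (hdn ▸ h)
            · exact Or.inl (hdm ▸ h))
          rw [hdm, hdn] at hAimm
          -- a ≤ b in A, a ≠ b; but s ++ [b] is a play of A, so a ∈ s
          have hbcfg : ConfigOf A.le A.conflict {x | x ∈ s ++ [b]} :=
            hsb.1 _ (List.prefix_refl _)
          have hain : a ∈ {x | x ∈ s ++ [b]} := hbcfg.2.1 b (by simp) a hAimm.1
          simp only [Set.mem_setOf_eq, List.mem_append, List.mem_singleton] at hain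
          rcases hain with hain | hain
          · -- contradicts the nodup of s ++ a :: b :: t
            have hnodA := (unfold_play S hu).2.1
            rw [← hmap, List.nodup_append] at hnodA
            exact hnodA.2.2 a hain a (by simp) rfl
          · exact hAimm.2.1 hain
        -- the swapped sequence is a play of σ
        refine ⟨u₁ ++ n :: m :: u₂, ⟨?_, ?_, ?_⟩,
          by simp [List.map_append, hmap₁, hdm, hdn, hmapt]⟩
        · intro q hq
          rcases prefix_append_cases hq with hq | ⟨p, hp, rfl⟩
          · exact hu.1 q (hq.trans ⟨m :: n :: u₂, rfl⟩)
          · cases p with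
            | nil =>
              rw [List.append_nil]
              exact hu.1 u₁ ⟨m :: n :: u₂, rfl⟩
            | cons x p' =>
              rw [List.cons_prefix_cons] at hp
              obtain ⟨h1, hp⟩ := hp
              subst x
              cases p' with
              | nil =>
                -- the new configuration {u₁} ∪ {n}
                refine ⟨?_, ?_, ?_⟩
                · have hset : {e | e ∈ u₁ ++ [n]} = insert n {e | e ∈ u₁} :=
                    set_concat u₁ n
                  rw [hset]; exact hX0.1.insert n
                · intro e he e' hle
                  simp only [Set.mem_setOf_eq, List.mem_append, List.mem_singleton] at he ⊢
                  rcases he with he | heq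
                  · exact Or.inl (hX0.2.1 e he e' hle)
                  · rw [heq] at hle
                    have he' : e' ∈ {e | e ∈ u₁ ++ [m, n]} := hX2.2.1 n (by simp) e' hle
                    simp only [Set.mem_setOf_eq, List.mem_append, List.mem_cons,
                      List.mem_singleton, List.not_mem_nil, or_false] at he'
                    rcases he' with h | h | h
                    · exact Or.inl h
                    · exact absurd (h ▸ hle) key
                    · exact Or.inr h
                · intro e he e' he'
                  have hsub : ∀ z : β, z ∈ {e | e ∈ u₁ ++ [n]} →
                      z ∈ {e | e ∈ u₁ ++ [m, n]} := by
                    intro z hz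
                    simp only [Set.mem_setOf_eq, List.mem_append, List.mem_cons,
                      List.mem_singleton, List.not_mem_nil, or_false] at hz ⊢
                    tauto
                  exact hX2.2.2 e (hsub e he) e' (hsub e' he')
              | cons y p'' =>
                rw [List.cons_prefix_cons] at hp
                obtain ⟨h2, hp⟩ := hp
                subst y
                have hset : {e | e ∈ u₁ ++ n :: m :: p''} = {e | e ∈ u₁ ++ m :: n :: p''} := by
                  ext e; simp only [Set.mem_setOf_eq, List.mem_append, List.mem_cons]; tauto
                rw [hset]
                obtain ⟨r, rfl⟩ := hp
                exact hu.1 (u₁ ++ m :: n :: p'') ⟨r, by simp⟩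
        · have hperm : (u₁ ++ m :: n :: u₂).Perm (u₁ ++ n :: m :: u₂) :=
            List.Perm.append_left u₁ (List.Perm.swap n m u₂)
          exact hperm.nodup hu.2.1
        · intro c hc
          cases u₁ with
          | cons d u₁' =>
            simp only [List.cons_append, List.getElem?_cons_zero, Option.some.injEq] at hc
            subst hc
            exact hu.2.2 d (by simp)
          | nil =>
            simp only [List.nil_append, List.getElem?_cons_zero, Option.some.injEq] at hc
            subst hc
            have hmin : MinimalOf S.le n := by
              intro e' hle
              have he' : e' ∈ {e | e ∈ ([] : List β) ++ [m, n]} := hX2.2.1 n (by simp) e' hle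
              simp only [Set.mem_setOf_eq, List.nil_append, List.mem_cons,
                List.mem_singleton, List.not_mem_nil, or_false] at he'
              rcases he' with h | h
              · exact absurd (h ▸ hle) key
              · exact h
            exact S.negative n hmin
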